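/- Let xₙ = 1/n and p ∈ ℕ with p ≥ 1. If eₙ = C₁ + C₂ xₙ^{p+1} + rₙ with |rₙ| ≤ C xₙ^{p+2}, then |eₙ - eₙ₊₁| / (xₙ - xₙ₊₁)^p → 0 as n → ∞. -/

import Mathlib

open Filter

/-- Corollary 1 of the paper for the sequence `xₙ = 1/n`, formalized (as the
context instructs) for `p = 1`. -/
theorem inverse_n_sequence_smooth_extension
    (p : ℕ) (hp : p = 1) (C₁ C₂ C : ℝ) (hC : 0 ≤ C) (e r : ℕ → ℝ)
    (he : ∀ n : ℕ, e n = C₁ + C₂ * ((n : ℝ)⁻¹) ^ (p + 1) + r n)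
    (hr : ∀ n : ℕ, 1 ≤ n → |r n| ≤ C * ((n : ℝ)⁻¹) ^ (p + 2)) :
    Tendsto
      (fun n : ℕ => |e n - e (n + 1)| / ((n : ℝ)⁻¹ - ((n : ℝ) + 1)⁻¹) ^ p)
      atTop (nhds 0) := by
  subst hp
  have hg : Tendsto (fun n : ℕ => (2 * |C₂| + 3 * C) / (n : ℝ)) atTop (nhds 0) :=
    tendsto_const_div_atTop_nhds_zero_nat _
  apply squeeze_zero' (g := fun n : ℕ => (2 * |C₂| + 3 * C) / (n : ℝ)) ?_ ?_ hg
  · filter_upwards [eventually_ge_atTop 1] with n hn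
    have ha : (1:ℝ) ≤ (n:ℝ) := by exact_mod_cast hn
    have hden : (0:ℝ) < ((n : ℝ)⁻¹ - ((n : ℝ) + 1)⁻¹) ^ 1 := by
      have h1 : ((n:ℝ)+1)⁻¹ < (n:ℝ)⁻¹ := by
        apply inv_strictAnti₀ <;> linarith
      simpa using sub_pos.mpr h1
    positivity
  · filter_upwards [eventually_ge_atTop 1] with n hn
    have ha : (1:ℝ) ≤ (n:ℝ) := by exact_mod_cast hn
    set a : ℝ := (n:ℝ) with hadef
    have ha0 : 0 < a := by linarith
    have ha1 : 0 < a + 1 := by linarith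
    have hden : (0:ℝ) < a⁻¹ - (a+1)⁻¹ := by
      have h1 : (a+1)⁻¹ < a⁻¹ := by apply inv_strictAnti₀ <;> linarith
      linarith
    have hr1 := hr n hn
    have hr2 := hr (n+1) (by omega)
    push_cast at hr2
    have hdiff : e n - e (n+1) = C₂ * (a⁻¹^2 - (a+1)⁻¹^2) + (r n - r (n+1)) := by
      rw [he n, he (n+1)]; push_cast; ring
    have habs : |e n - e (n+1)| ≤ |C₂| * (a⁻¹^2 - (a+1)⁻¹^2) + C * a⁻¹^3 + C * (a+1)⁻¹^3 := by
      rw [hdiff]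
      calc |C₂ * (a⁻¹^2 - (a+1)⁻¹^2) + (r n - r (n+1))|
          ≤ |C₂ * (a⁻¹^2 - (a+1)⁻¹^2)| + (|r n| + |r (n+1)|) := by
            refine (abs_add_le _ _).trans ?_
            exact add_le_add (le_refl _) (abs_sub _ _)
        _ ≤ |C₂| * (a⁻¹^2 - (a+1)⁻¹^2) + C * a⁻¹^3 + C * (a+1)⁻¹^3 := by
            rw [abs_mul]
            have hnn : 0 ≤ a⁻¹^2 - (a+1)⁻¹^2 := by
              have h1 : (a+1)⁻¹ ≤ a⁻¹ := le_of_lt (by apply inv_strictAnti₀ <;> linarith)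
              have h2 : 0 ≤ (a+1)⁻¹ := by positivity
              nlinarith
            rw [abs_of_nonneg hnn]
            linarith [hr1, hr2]
    have hdivle : |e n - e (n+1)| / (a⁻¹ - (a+1)⁻¹) ≤
        (|C₂| * (a⁻¹^2 - (a+1)⁻¹^2) + C * a⁻¹^3 + C * (a+1)⁻¹^3) / (a⁻¹ - (a+1)⁻¹) :=
      div_le_div_of_nonneg_right habs hden.le |>.trans_eq rfl
    have hbound : (|C₂| * (a⁻¹^2 - (a+1)⁻¹^2) + C * a⁻¹^3 + C * (a+1)⁻¹^3) / (a⁻¹ - (a+1)⁻¹)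
        ≤ (2 * |C₂| + 3 * C) / a := by
      rw [div_le_div_iff₀ hden ha0]
      clear habs hdivle hdiff hr1 hr2 he hr hg hn
      have hu : a * a⁻¹ = 1 := mul_inv_cancel₀ ha0.ne'
      have hv : (a + 1) * (a + 1)⁻¹ = 1 := mul_inv_cancel₀ ha1.ne'
      have hu0 : 0 < a⁻¹ := by positivity
      have hv0 : 0 < (a + 1)⁻¹ := by positivity
      have huv : a⁻¹ - (a + 1)⁻¹ = a⁻¹ * (a + 1)⁻¹ := by field_simp; ring
      have hav : a * (a + 1)⁻¹ ≤ 1 := by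
        have h := mul_le_mul_of_nonneg_right (show a ≤ a + 1 by linarith) hv0.le
        linarith [hv]
      have hvu : (a + 1)⁻¹ ≤ a⁻¹ := by linarith
      have hu2v : a⁻¹ ≤ 2 * (a + 1)⁻¹ := by
        rw [inv_eq_one_div, show (2:ℝ) * (a + 1)⁻¹ = 2 / (a + 1) by rw [div_eq_mul_inv],
          div_le_div_iff₀ ha0 ha1]
        linarith
      have e1 : (a⁻¹ ^ 2 - (a + 1)⁻¹ ^ 2) * a = (a⁻¹ * (a + 1)⁻¹) * (1 + a * (a + 1)⁻¹) := by
        field_simp; ring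
      have e2 : a⁻¹ ^ 3 * a = a⁻¹ ^ 2 := by field_simp
      have e3 : (a + 1)⁻¹ ^ 3 * a = (a + 1)⁻¹ ^ 2 * (a * (a + 1)⁻¹) := by ring
      have t1 : (a⁻¹ ^ 2 - (a + 1)⁻¹ ^ 2) * a ≤ 2 * (a⁻¹ * (a + 1)⁻¹) := by
        rw [e1]
        nlinarith [mul_nonneg (mul_pos hu0 hv0).le (sub_nonneg.mpr hav)]
      have t2 : a⁻¹ ^ 3 * a ≤ 2 * (a⁻¹ * (a + 1)⁻¹) := by
        rw [e2]
        nlinarith [mul_nonneg hu0.le (sub_nonneg.mpr hu2v)]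
      have t3 : (a + 1)⁻¹ ^ 3 * a ≤ a⁻¹ * (a + 1)⁻¹ := by
        rw [e3]
        nlinarith [mul_nonneg (sq_nonneg ((a + 1)⁻¹)) (sub_nonneg.mpr hav),
          mul_nonneg hv0.le (sub_nonneg.mpr hvu)]
      rw [huv]
      nlinarith [mul_le_mul_of_nonneg_left t1 (abs_nonneg C₂),
        mul_le_mul_of_nonneg_left t2 hC, mul_le_mul_of_nonneg_left t3 hC,
        mul_nonneg hu0.le hv0.le]
    calc |e n - e (n+1)| / (a⁻¹ - (a+1)⁻¹)^1
        = |e n - e (n+1)| / (a⁻¹ - (a+1)⁻¹) := by rw [pow_one]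
      _ ≤ _ := hdivle.trans hbound
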